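/- Suppose player II has a winning strategy τ in the measure game G(s,A). Then for every ε > 0 there exists a tree T_ε ⊆ 2^{<ω} such that μ([T_ε]) > 1 − s − ε and every branch through T_ε is the sequence of II's moves in some run of G(s,A) consistent with τ; in particular [T_ε] ⊆ A, and consequently μ_*(A) ≥ 1 − s. -/

import Mathlib

open MeasureTheory

namespace MeasureGame

/-- Cantor space `2^ω`. -/
abbrev Cantor : Type := ℕ → Bool

/-- The basic cylinder set `N_t` determined by a finite binary string `t`. -/
def cyl (t : List Bool) : Set Cantor := {x | ∀ i : Fin t.length, x i.1 = t.get i}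

/-- A round of the measure game: player I's pair of rationals, then player II's bit. -/
abbrev GRound : Type := (ℚ × ℚ) × Bool

/-- A strategy for player I in the measure game. -/
abbrev StratI : Type := List GRound → ℚ × ℚ

/-- A strategy for player II in the measure game. -/
abbrev StratII : Type := List GRound → ℚ × ℚ → Bool

/-- A run of the measure game. -/
abbrev Run : Type := ℕ → GRound

/-- The history (list of completed rounds) before round `n`. -/
def hist (r : Run) (n : ℕ) : List GRound := (List.range n).map r

/-- Player II's bit at round `n`. -/
def bits (r : Run) (n : ℕ) : Bool := (r n).2

/-- The finite binary string of player II's first `n` bits. -/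
def path (r : Run) (n : ℕ) : List Bool := (List.range n).map (bits r)

/-- The value player I assigned at round `n` to the one-bit extension of the current path by `b`. -/
def valI (r : Run) (n : ℕ) (b : Bool) : ℚ := if b then (r n).1.2 else (r n).1.1

/-- The value selected by player II's move at round `n`. -/
def sel (r : Run) (n : ℕ) : ℚ := valI r n (bits r n)

/-- Legality requirements on the single value player I assigned to `path r n ++ [b]`:
it is nonnegative, at most `μ(N_{t⌢b})`, and strictly below it when the latter is positive. -/
def mOK (μ : Measure Cantor) (r : Run) (n : ℕ) (b : Bool) : Prop :=
  0 ≤ valI r n b ∧ ((valI r n b : ℝ) ≤ (μ (cyl (path r n ++ [b]))).toReal) ∧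
    (0 < (μ (cyl (path r n ++ [b]))).toReal → (valI r n b : ℝ) < (μ (cyl (path r n ++ [b]))).toReal)

/-- Player I's move at round `n` of a run is legal (for the game `G(s, ·)`). -/
def IOK (μ : Measure Cantor) (s : ℝ) (r : Run) : ℕ → Prop
  | 0 => mOK μ r 0 false ∧ mOK μ r 0 true ∧ s < ((r 0).1.1 : ℝ) + ((r 0).1.2 : ℝ)
  | (n + 1) => mOK μ r (n + 1) false ∧ mOK μ r (n + 1) true ∧
      (r (n + 1)).1.1 + (r (n + 1)).1.2 = sel r n

/-- Player II's move at round `n` of a run is legal: the selected value is nonzero. -/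
def IIOK (r : Run) (n : ℕ) : Prop := sel r n ≠ 0

/-- The run `r` is consistent with player I's strategy `σ`. -/
def ConsI (σ : StratI) (r : Run) : Prop := ∀ n, (r n).1 = σ (hist r n)

/-- The run `r` is consistent with player II's strategy `τ`. -/
def ConsII (τ : StratII) (r : Run) : Prop := ∀ n, (r n).2 = τ (hist r n) (r n).1

/-- Player II wins the run `r` of `G(s, A)`: either player I is the first to break a rule,
or all rules are followed and the sequence of II's bits belongs to `A`. -/
def IIWinsRun (μ : Measure Cantor) (s : ℝ) (A : Set Cantor) (r : Run) : Prop :=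
  (∃ n, (∀ m < n, IOK μ s r m ∧ IIOK r m) ∧ ¬ IOK μ s r n) ∨
    ((∀ n, IOK μ s r n ∧ IIOK r n) ∧ bits r ∈ A)

/-- Player I has a winning strategy in the measure game `G(s, A)`. -/
def WinsI (μ : Measure Cantor) (s : ℝ) (A : Set Cantor) : Prop :=
  ∃ σ : StratI, ∀ r : Run, ConsI σ r → ¬ IIWinsRun μ s A r

/-- Player II has a winning strategy in the measure game `G(s, A)`. -/
def WinsII (μ : Measure Cantor) (s : ℝ) (A : Set Cantor) : Prop :=
  ∃ τ : StratII, ∀ r : Run, ConsII τ r → IIWinsRun μ s A r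

/-- The outer measure `μ*(A) = inf {μ(U) : U open, A ⊆ U}`. -/
noncomputable def outerM (μ : Measure Cantor) (A : Set Cantor) : ℝ :=
  sInf {v : ℝ | ∃ U : Set Cantor, IsOpen U ∧ A ⊆ U ∧ v = (μ U).toReal}

/-- The inner measure `μ_*(A) = sup {μ(F) : F closed, F ⊆ A}`. -/
noncomputable def innerM (μ : Measure Cantor) (A : Set Cantor) : ℝ :=
  sSup {v : ℝ | ∃ F : Set Cantor, IsClosed F ∧ F ⊆ A ∧ v = (μ F).toReal}


/-- A tree on `2^{<ω}`: a set of finite binary strings closed under initial segments. -/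
def IsTree (T : Set (List Bool)) : Prop := ∀ t ∈ T, ∀ u : List Bool, u <+: t → u ∈ T

/-- The set of infinite branches through a set `T` of finite binary strings. -/
def branches (T : Set (List Bool)) : Set Cantor := {x | ∀ n : ℕ, (List.range n).map x ∈ T}

section CylLemmas

variable (μ : Measure Cantor) [IsProbabilityMeasure μ]

lemma mem_cyl {t : List Bool} {x : Cantor} :
    x ∈ cyl t ↔ (List.range t.length).map x = t := by
  constructor
  · intro hx
    apply List.ext_get
    · simp
    · intro i h1 h2
      simp only [List.get_eq_getElem, List.getElem_map, List.getElem_range]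
      exact hx ⟨i, h2⟩
  · intro h i
    have h2 := List.getElem_of_eq h (i := i.1) (by simpa using i.2)
    simpa [List.get_eq_getElem] using h2

lemma cyl_nil : cyl ([] : List Bool) = Set.univ := by
  ext x; simp [cyl]

lemma cyl_anti {t u : List Bool} (h : t <+: u) : cyl u ⊆ cyl t := by
  obtain ⟨w, rfl⟩ := h
  intro x hx i
  have := hx ⟨i.1, by simp; omega⟩
  simpa [List.getElem_append, i.2] using this

lemma measurableSet_cyl (t : List Bool) : MeasurableSet (cyl t) := by
  have : cyl t = ⋂ i : Fin t.length, {x : Cantor | x i.1 = t.get i} := by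
    ext x; simp [cyl, Set.mem_iInter]
  rw [this]
  refine MeasurableSet.iInter fun i => ?_
  show MeasurableSet ((fun x : Cantor => x i.1) ⁻¹' {t.get i})
  exact (measurable_pi_apply i.1) (measurableSet_singleton (t.get i))

lemma isClosed_cyl (t : List Bool) : IsClosed (cyl t) := by
  have : cyl t = ⋂ i : Fin t.length, (fun x : Cantor => x i.1) ⁻¹' {t.get i} := by
    ext x; simp [cyl, Set.mem_iInter]
  rw [this]
  exact isClosed_iInter fun i => (isClosed_singleton).preimage (continuous_apply i.1)

lemma cyl_eq_union (t : List Bool) :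
    cyl t = cyl (t ++ [false]) ∪ cyl (t ++ [true]) := by
  ext x
  simp only [mem_cyl, Set.mem_union, List.length_append, List.length_cons, List.length_nil]
  constructor
  · intro h
    cases hb : x t.length
    · left
      rw [List.range_succ, List.map_append]
      simp [h, hb]
    · right
      rw [List.range_succ, List.map_append]
      simp [h, hb]
  · rintro (h | h) <;>
    · rw [List.range_succ, List.map_append] at h
      have := congrArg (List.take t.length) h
      simpa using this

lemma disjoint_cyl (t : List Bool) :
    Disjoint (cyl (t ++ [false])) (cyl (t ++ [true])) := by
  rw [Set.disjoint_left]
  intro x h0 h1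
  rw [mem_cyl] at h0 h1
  have hl : (t ++ [false]).length = (t ++ [true]).length := by simp
  have : (t ++ [false] : List Bool) = t ++ [true] := by rw [← h0, hl, h1]
  simpa using this

lemma measure_cyl_split (t : List Bool) :
    (μ (cyl t)).toReal
      = (μ (cyl (t ++ [false]))).toReal + (μ (cyl (t ++ [true]))).toReal := by
  rw [cyl_eq_union t, measure_union (disjoint_cyl t) (measurableSet_cyl _),
    ENNReal.toReal_add (measure_ne_top μ _) (measure_ne_top μ _)]
end CylLemmas

section Game

variable (μ : Measure Cantor) [IsProbabilityMeasure μ] (τ : StratII) (v0 : ℚ)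

/-- II's bits along a position (list of rounds). -/
def pbits (h : List GRound) : List Bool := h.map (·.2)

/-- the value a pair assigns to side `b`. -/
def pv (p : ℚ × ℚ) (b : Bool) : ℚ := if b then p.2 else p.1

/-- pair assigning value `y` to side `b` and `z` to side `!b`. -/
def pmk (b : Bool) (y z : ℚ) : ℚ × ℚ := if b then (z, y) else (y, z)

@[simp] lemma pv_pmk (b : Bool) (y z : ℚ) : pv (pmk b y z) b = y := by
  cases b <;> simp [pv, pmk]

@[simp] lemma pv_pmk_not (b : Bool) (y z : ℚ) : pv (pmk b y z) (!b) = z := by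
  cases b <;> simp [pv, pmk]

lemma pmk_sum (b : Bool) (y z : ℚ) : (pmk b y z).1 + (pmk b y z).2 = y + z := by
  cases b <;> simp [pmk] <;> ring

/-- the value that the next move must sum to. -/
def nsum (h : List GRound) : ℚ :=
  match h.getLast? with
  | none => v0
  | some (p, b) => pv p b

@[simp] lemma nsum_nil : nsum v0 [] = v0 := rfl

@[simp] lemma nsum_concat (h : List GRound) (p : ℚ × ℚ) (b : Bool) :
    nsum v0 (h ++ [(p, b)]) = pv p b := by
  simp [nsum, List.getLast?_concat]

/-- legality of the pair `p` played by I at position `h`. -/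
def OKmove (h : List GRound) (p : ℚ × ℚ) : Prop :=
  (∀ b : Bool, 0 ≤ pv p b ∧ ((pv p b : ℝ) ≤ (μ (cyl (pbits h ++ [b]))).toReal) ∧
    (0 < (μ (cyl (pbits h ++ [b]))).toReal →
      (pv p b : ℝ) < (μ (cyl (pbits h ++ [b]))).toReal)) ∧
  p.1 + p.2 = nsum v0 h

/-- positions reachable when II plays `τ` and I plays legally. -/
inductive GoodPos : List GRound → Prop
  | nil : GoodPos []
  | snoc {h : List GRound} {p : ℚ × ℚ} : GoodPos h → OKmove μ v0 h p →
      GoodPos (h ++ [(p, τ h p)])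

@[simp] lemma pbits_concat (h : List GRound) (g : GRound) :
    pbits (h ++ [g]) = pbits h ++ [g.2] := by simp [pbits]

@[simp] lemma pbits_length (h : List GRound) : (pbits h).length = h.length := by
  simp [pbits]

@[simp] lemma pbits_take (h : List GRound) (k : ℕ) :
    pbits (h.take k) = (pbits h).take k := by simp [pbits, List.map_take]

lemma hist_succ (r : Run) (n : ℕ) : hist r (n + 1) = hist r n ++ [r n] := by
  simp [hist, List.range_succ]

@[simp] lemma hist_zero (r : Run) : hist r 0 = [] := rfl

lemma path_eq_pbits (r : Run) (n : ℕ) : path r n = pbits (hist r n) := by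
  simp only [path, pbits, hist, List.map_map]
  rfl

lemma valI_eq_pv (r : Run) (n : ℕ) (b : Bool) : valI r n b = pv ((r n).1) b := by
  cases b <;> rfl

lemma sel_eq_nsum (r : Run) (n : ℕ) : sel r n = nsum v0 (hist r (n + 1)) := by
  rw [hist_succ, nsum_concat]
  rfl

/-- translation: a legal move in the position sense gives a legal move of the run. -/
lemma IOK_of_OKmove {s : ℝ} (hs : s < (v0 : ℝ)) (r : Run) (n : ℕ)
    (hOK : OKmove μ v0 (hist r n) ((r n).1)) : IOK μ s r n := by
  have hmOK : ∀ b, mOK μ r n b := by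
    intro b
    have := hOK.1 b
    rw [mOK, path_eq_pbits, valI_eq_pv]
    exact this
  cases n with
  | zero =>
    refine ⟨hmOK false, hmOK true, ?_⟩
    have h2 := hOK.2
    simp only [hist_zero, nsum_nil] at h2
    have : ((r 0).1.1 : ℝ) + ((r 0).1.2 : ℝ) = (v0 : ℝ) := by exact_mod_cast h2
    linarith
  | succ m =>
    refine ⟨hmOK false, hmOK true, ?_⟩
    rw [sel_eq_nsum v0 r m]
    exact hOK.2

end Game
section Playout

variable (μ : Measure Cantor) [IsProbabilityMeasure μ] (τ : StratII) (v0 : ℚ)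

lemma GoodPos.step_spec {h : List GRound} (hg : GoodPos μ τ v0 h) :
    ∀ k (hk : k < h.length), OKmove μ v0 (h.take k) (h[k]'hk).1 ∧
      (h[k]'hk).2 = τ (h.take k) ((h[k]'hk).1) := by
  induction hg with
  | nil => intro k hk; simp at hk
  | @snoc h p hg hok ih =>
    intro k hk
    have hk' : k < h.length + 1 := by simpa using hk
    rcases Nat.lt_or_ge k h.length with hlt | hge
    · have e1 : (h ++ [(p, τ h p)])[k]'hk = h[k]'hlt := by
        rw [List.getElem_append_left hlt]
      have e2 : (h ++ [(p, τ h p)]).take k = h.take k :=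
        List.take_append_of_le_length (le_of_lt hlt)
      rw [e1, e2]
      exact ih k hlt
    · have hke : k = h.length := le_antisymm (by omega) hge
      have e1 : (h ++ [(p, τ h p)])[k]'hk = (p, τ h p) :=
        List.getElem_concat_length hke _
      have e2 : (h ++ [(p, τ h p)]).take k = h := by
        rw [hke]; exact List.take_left
      rw [e1, e2]
      exact ⟨hok, rfl⟩

/-- play out the game: II plays `τ`, I plays the one-move-function `f`. -/
def playHist (f : List GRound → ℚ × ℚ) : ℕ → List GRound
  | 0 => []
  | n+1 => playHist f n ++ [(f (playHist f n), τ (playHist f n) (f (playHist f n)))]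

def playRun (f : List GRound → ℚ × ℚ) : Run :=
  fun n => (f (playHist τ f n), τ (playHist τ f n) (f (playHist τ f n)))

lemma playHist_length (f : List GRound → ℚ × ℚ) (n : ℕ) :
    (playHist τ f n).length = n := by
  induction n with
  | zero => rfl
  | succ m ih => simp [playHist, ih]

lemma hist_playRun (f : List GRound → ℚ × ℚ) (n : ℕ) :
    hist (playRun τ f) n = playHist τ f n := by
  induction n with
  | zero => rfl
  | succ m ih => rw [hist_succ, ih]; rfl

lemma consII_playRun (f : List GRound → ℚ × ℚ) : ConsII τ (playRun τ f) := by
  intro n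
  rw [hist_playRun]
  rfl

lemma sel_eq_pv (r : Run) (n : ℕ) : sel r n = pv ((r n).1) ((r n).2) := by
  rw [sel, valI_eq_pv]; rfl

lemma no_zero_pick {A : Set Cantor} {s : ℝ}
    (hτ : ∀ r : Run, ConsII τ r → IIWinsRun μ s A r) (hs : s < (v0 : ℝ))
    {h : List GRound} {p : ℚ × ℚ} (hg : GoodPos μ τ v0 h) (hok : OKmove μ v0 h p) :
    pv p (τ h p) ≠ 0 := by
  intro hzero
  set h' := h ++ [(p, τ h p)] with hh'
  have hg' : GoodPos μ τ v0 h' := hg.snoc hok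
  have hlen : h'.length = h.length + 1 := by simp [hh']
  set f : List GRound → ℚ × ℚ :=
    fun q => if hq : q.length < h'.length then (h'[q.length]'hq).1 else (0, 0) with hf
  have hfval : ∀ (q : List GRound) (n : ℕ), q.length = n → ∀ (hn : n < h'.length),
      f q = (h'[n]'hn).1 := by
    intro q n hqn hn
    subst hqn
    simp only [hf]
    exact dif_pos hn
  have hfzero : ∀ (q : List GRound) (n : ℕ), q.length = n → h'.length ≤ n →
      f q = (0, 0) := by
    intro q n hqn hge
    subst hqn
    simp only [hf]
    exact dif_neg (by omega)
  set r := playRun τ f with hr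
  have hph : ∀ k, k ≤ h'.length → playHist τ f k = h'.take k := by
    intro k hk
    induction k with
    | zero => simp [playHist]
    | succ m ih =>
      have hm : m < h'.length := by omega
      have ihm := ih (le_of_lt hm)
      have hfl : f (playHist τ f m) = (h'[m]'hm).1 :=
        hfval _ m (playHist_length τ f m) hm
      have hspec := (hg'.step_spec) m hm
      have e1 : playHist τ f (m + 1)
          = h'.take m ++ [((h'[m]'hm).1, τ (h'.take m) ((h'[m]'hm).1))] := by
        rw [playHist, hfl, ihm]
      rw [e1, ← hspec.2]
      rw [← List.take_concat_get hm, List.concat_eq_append]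
  have hist_eq : ∀ k, k ≤ h'.length → hist r k = h'.take k := by
    intro k hk; rw [hr, hist_playRun]; exact hph k hk
  have hist_full : hist r h'.length = h' := by
    rw [hist_eq h'.length le_rfl, List.take_length]
  have hrn_ge : ∀ n, h'.length ≤ n → (r n).1 = (0, 0) := by
    intro n hn
    exact hfzero _ n (playHist_length τ f n) hn
  have hnsum : ∀ m : ℕ, nsum v0 (hist r (h'.length + m)) = 0 := by
    intro m
    induction m with
    | zero => rw [Nat.add_zero, hist_full, hh', nsum_concat, hzero]
    | succ k ih =>
      rw [← Nat.add_assoc, hist_succ, nsum_concat]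
      have e2 : (r (h'.length + k)).1 = (0, 0) := hrn_ge _ (by omega)
      rw [e2]
      cases (r (h'.length + k)).2 <;> simp [pv]
  have hOKall : ∀ n, OKmove μ v0 (hist r n) ((r n).1) := by
    intro n
    rcases Nat.lt_or_ge n h'.length with hlt | hge
    · have h1 : hist r n = h'.take n := hist_eq n (le_of_lt hlt)
      have h2 : (r n).1 = (h'[n]'hlt).1 := hfval _ n (playHist_length τ f n) hlt
      rw [h1, h2]
      exact ((hg'.step_spec) n hlt).1
    · obtain ⟨m, rfl⟩ := Nat.exists_eq_add_of_le hge
      have h2 : (r (h'.length + m)).1 = (0, 0) := hrn_ge _ (by omega)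
      rw [h2]
      constructor
      · intro b
        refine ⟨by cases b <;> simp [pv], ?_, ?_⟩
        · cases b <;> simp [pv, ENNReal.toReal_nonneg]
        · intro hpos; cases b <;> simpa [pv] using hpos
      · simp [hnsum m]
  have hIOK : ∀ n, IOK μ s r n := fun n => IOK_of_OKmove μ v0 hs r n (hOKall n)
  have hwin := hτ r (consII_playRun τ f)
  have hph3 : playHist τ f h.length = h := by
    rw [hph h.length (by omega), hh', List.take_left]
  have hgetp : (h'[h.length]'(by omega)) = (p, τ h p) :=
    List.getElem_concat_length rfl _
  have hfh : f h = p := by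
    rw [hfval h h.length rfl (by omega)]
    exact congrArg Prod.fst hgetp
  rcases hwin with ⟨n, _, hnot⟩ | ⟨hall, _⟩
  · exact hnot (hIOK n)
  · have hii := (hall h.length).2
    apply hii
    rw [sel_eq_pv]
    have h1 : (r h.length).1 = p := by
      show f (playHist τ f h.length) = p
      rw [hph3, hfh]
    have h4 : (r h.length).2 = τ h p := by
      show τ (playHist τ f h.length) (f (playHist τ f h.length)) = τ h p
      rw [hph3, hfh]
    rw [h1, h4]
    exact hzero

end Playout
section Construction

variable (μ : Measure Cantor) [IsProbabilityMeasure μ] (τ : StratII) (v0 κ0 : ℚ)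
  (hκ : 0 < κ0)

/-- the (real) values offered to side `b` by legal moves that `τ` answers with `b`. -/
def Vset (h : List GRound) (b : Bool) : Set ℝ :=
  {x | ∃ p : ℚ × ℚ, OKmove μ v0 h p ∧ τ h p = b ∧ x = (pv p b : ℝ)}

/-- abbreviation for the measure of the cylinder below `t ++ [b]`. -/
noncomputable abbrev cylm (t : List Bool) (b : Bool) : ℝ := (μ (cyl (t ++ [b]))).toReal

lemma cylm_nonneg (t : List Bool) (b : Bool) : 0 ≤ cylm μ t b := ENNReal.toReal_nonneg

lemma cylm_add (t : List Bool) (b : Bool) :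
    cylm μ t b + cylm μ t (!b) = (μ (cyl t)).toReal := by
  cases b
  · rw [measure_cyl_split μ t]; rfl
  · rw [measure_cyl_split μ t, add_comm]; rfl

lemma Vset_mem_nonneg {h : List GRound} {b : Bool} {x : ℝ} (hx : x ∈ Vset μ τ v0 h b) :
    0 ≤ x := by
  obtain ⟨p, hok, -, rfl⟩ := hx
  exact_mod_cast (hok.1 b).1

lemma Vset_bddBelow (h : List GRound) (b : Bool) : BddBelow (Vset μ τ v0 h b) :=
  ⟨0, fun x hx => Vset_mem_nonneg μ τ v0 hx⟩

lemma exists_near_inf {h : List GRound} {b : Bool} (hb : (Vset μ τ v0 h b).Nonempty)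
    {δ : ℝ} (hδ : 0 < δ) :
    ∃ p : ℚ × ℚ, OKmove μ v0 h p ∧ τ h p = b ∧
      (pv p b : ℝ) < sInf (Vset μ τ v0 h b) + δ := by
  obtain ⟨x, hx, hlt⟩ := exists_lt_of_csInf_lt hb (lt_add_of_pos_right _ hδ)
  obtain ⟨p, h1, h2, rfl⟩ := hx
  exact ⟨p, h1, h2, hlt⟩

lemma kfac_pos (hκ : 0 < κ0) (n : ℕ) : (0:ℝ) < ((κ0 / 4 ^ n : ℚ) : ℝ) := by
  positivity

open Classical in
noncomputable def stepD (h : List GRound) (b : Bool) : Option (ℚ × List GRound) :=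
  if hb : (Vset μ τ v0 h b).Nonempty then
    some (pv (Classical.choose (exists_near_inf μ τ v0 hb
        (kfac_pos κ0 hκ h.length))) b,
      h ++ [(Classical.choose (exists_near_inf μ τ v0 hb
        (kfac_pos κ0 hκ h.length)), b)])
  else none

lemma stepD_some {h : List GRound} {b : Bool} {d : ℚ × List GRound}
    (hd : stepD μ τ v0 κ0 hκ h b = some d) :
    ∃ p : ℚ × ℚ, OKmove μ v0 h p ∧ τ h p = b ∧ d = (pv p b, h ++ [(p, b)]) ∧
      (pv p b : ℝ) < sInf (Vset μ τ v0 h b) + ((κ0 / 4 ^ h.length : ℚ) : ℝ) := by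
  by_cases hb : (Vset μ τ v0 h b).Nonempty
  · rw [stepD] at hd
    rw [dif_pos hb] at hd
    obtain ⟨h1, h2, h3⟩ := Classical.choose_spec (exists_near_inf μ τ v0 hb
        (kfac_pos κ0 hκ h.length))
    exact ⟨_, h1, h2, (Option.some.inj hd).symm, h3⟩
  · rw [stepD] at hd
    rw [dif_neg hb] at hd
    exact absurd hd (by simp)

lemma stepD_none {h : List GRound} {b : Bool}
    (hd : stepD μ τ v0 κ0 hκ h b = none) : ¬ (Vset μ τ v0 h b).Nonempty := by
  intro hb
  rw [stepD] at hd
  rw [dif_pos hb] at hd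
  exact absurd hd (by simp)

/-- the constructed strategy-tree data, indexed by reversed strings. -/
noncomputable def DD : List Bool → Option (ℚ × List GRound)
  | [] => some (v0, [])
  | b :: l => (DD l).bind (fun d => stepD μ τ v0 κ0 hκ d.2 b)

/-- the tree data: value and position attached to each live node. -/
noncomputable def Dfun (t : List Bool) : Option (ℚ × List GRound) :=
  DD μ τ v0 κ0 hκ t.reverse

lemma Dfun_nil : Dfun μ τ v0 κ0 hκ [] = some (v0, []) := rfl

lemma Dfun_snoc (t : List Bool) (b : Bool) :
    Dfun μ τ v0 κ0 hκ (t ++ [b])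
      = (Dfun μ τ v0 κ0 hκ t).bind (fun d => stepD μ τ v0 κ0 hκ d.2 b) := by
  rw [Dfun, List.reverse_append]
  rfl

lemma Dfun_some_of_append {t u : List Bool}
    (h : (Dfun μ τ v0 κ0 hκ (t ++ u)).isSome) : (Dfun μ τ v0 κ0 hκ t).isSome := by
  induction u using List.reverseRecOn with
  | nil => simpa using h
  | append_singleton u b ih =>
    apply ih
    rw [← List.append_assoc, Dfun_snoc] at h
    cases e : Dfun μ τ v0 κ0 hκ (t ++ u) with
    | none => rw [e] at h; simp at h
    | some d => simp [e]

end Construction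
section NodeAnalysis

variable {μ : Measure Cantor} [IsProbabilityMeasure μ] {τ : StratII} {v0 : ℚ}

lemma bool_eq_not {a b : Bool} (h : a ≠ b) : a = !b := by
  cases a <;> cases b <;> simp_all

lemma pv_add (p : ℚ × ℚ) (b : Bool) : pv p b + pv p (!b) = p.1 + p.2 := by
  cases b <;> simp [pv] <;> ring

lemma okmove_pmk {h : List GRound} (b : Bool) (q : ℚ)
    (h1 : max 0 ((nsum v0 h : ℝ) - cylm μ (pbits h) (!b)) < (q : ℝ))
    (h2 : (q : ℝ) < min ((nsum v0 h : ℝ)) (cylm μ (pbits h) b)) :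
    OKmove μ v0 h (pmk b q (nsum v0 h - q)) := by
  set v := nsum v0 h with hv
  have hq0 : (0:ℝ) < q := lt_of_le_of_lt (le_max_left _ _) h1
  have hqcb : (q:ℝ) < cylm μ (pbits h) b := lt_of_lt_of_le h2 (min_le_right _ _)
  have hqv : (q:ℝ) < (v:ℝ) := lt_of_lt_of_le h2 (min_le_left _ _)
  have hqnb : (v:ℝ) - cylm μ (pbits h) (!b) < q := lt_of_le_of_lt (le_max_right _ _) h1
  constructor
  · intro b'
    rcases eq_or_ne b' b with rfl | hne
    · rw [pv_pmk]
      refine ⟨by exact_mod_cast hq0.le, hqcb.le, fun _ => hqcb⟩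
    · rw [bool_eq_not hne, pv_pmk_not]
      have hle : ((v - q : ℚ) : ℝ) = (v:ℝ) - (q:ℝ) := by push_cast; ring
      refine ⟨by exact_mod_cast (by linarith : (0:ℝ) ≤ (v:ℝ) - q), ?_, fun _ => ?_⟩
      · rw [hle]; linarith
      · rw [hle]; linarith
  · rw [pmk_sum]; ring

lemma okmove_pmk_full {h : List GRound} (b : Bool) (hv0 : 0 ≤ nsum v0 h)
    (hvb : ((nsum v0 h : ℚ) : ℝ) < cylm μ (pbits h) b) :
    OKmove μ v0 h (pmk b (nsum v0 h) 0) := by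
  constructor
  · intro b'
    rcases eq_or_ne b' b with rfl | hne
    · rw [pv_pmk]
      exact ⟨hv0, hvb.le, fun _ => hvb⟩
    · rw [bool_eq_not hne, pv_pmk_not]
      exact ⟨le_refl 0, by exact_mod_cast cylm_nonneg μ _ _, fun hc => by exact_mod_cast hc⟩
  · rw [pmk_sum]; ring

lemma vset_mem_bounds {h : List GRound} {b : Bool} {x : ℝ} (hx : x ∈ Vset μ τ v0 h b) :
    max 0 ((nsum v0 h : ℝ) - cylm μ (pbits h) (!b)) ≤ x ∧
      x ≤ min ((nsum v0 h : ℝ)) (cylm μ (pbits h) b) := by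
  obtain ⟨p, hok, -, rfl⟩ := hx
  have hsum : (pv p b : ℝ) + (pv p (!b) : ℝ) = (nsum v0 h : ℝ) := by
    have := pv_add p b
    rw [hok.2] at this
    exact_mod_cast this
  have h1 := hok.1 b
  have h2 := hok.1 (!b)
  have h10 : (0:ℝ) ≤ (pv p b : ℝ) := by exact_mod_cast h1.1
  have h20 : (0:ℝ) ≤ (pv p (!b) : ℝ) := by exact_mod_cast h2.1
  constructor
  · exact max_le h10 (by have := h2.2.1; linarith)
  · exact le_min (by linarith) h1.2.1

/-- if `τ` never answers `b` at a live node, the `b`-side cylinder is small. -/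
lemma dead_le {s : ℝ} {A : Set Cantor}
    (hτ : ∀ r : Run, ConsII τ r → IIWinsRun μ s A r) (hs : s < (v0 : ℝ))
    {h : List GRound} (hg : GoodPos μ τ v0 h) (hv0 : 0 < nsum v0 h)
    (b : Bool) (hdead : ¬ (Vset μ τ v0 h b).Nonempty) :
    cylm μ (pbits h) b ≤ ((nsum v0 h : ℚ) : ℝ) := by
  by_contra hlt
  push_neg at hlt
  have hok : OKmove μ v0 h (pmk b (nsum v0 h) 0) := okmove_pmk_full b hv0.le hlt
  rcases eq_or_ne (τ h (pmk b (nsum v0 h) 0)) b with he | hne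
  · exact hdead ⟨_, _, hok, he, rfl⟩
  · have hz := no_zero_pick μ τ v0 hτ hs hg hok
    rw [bool_eq_not hne, pv_pmk_not] at hz
    exact hz rfl

lemma exists_live {s : ℝ} {A : Set Cantor}
    (hτ : ∀ r : Run, ConsII τ r → IIWinsRun μ s A r) (hs : s < (v0 : ℝ))
    {h : List GRound} (hg : GoodPos μ τ v0 h) (hv0 : 0 < nsum v0 h)
    (hvc : ((nsum v0 h : ℚ) : ℝ) < (μ (cyl (pbits h))).toReal) :
    (Vset μ τ v0 h false).Nonempty ∨ (Vset μ τ v0 h true).Nonempty := by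
  set v := nsum v0 h with hvdef
  have hvR : (0:ℝ) < (v:ℝ) := by exact_mod_cast hv0
  have hadd := cylm_add μ (pbits h) false
  simp only [Bool.not_false] at hadd
  have hvc' : (v:ℝ) < cylm μ (pbits h) false + cylm μ (pbits h) true := by
    rw [hadd]; exact hvc
  have hmain : ∃ p : ℚ × ℚ, OKmove μ v0 h p := by
    rcases le_or_gt (cylm μ (pbits h) true) 0 with hc1 | hc1
    · have hc1' : cylm μ (pbits h) true = 0 := le_antisymm hc1 (cylm_nonneg μ _ _)
      exact ⟨_, okmove_pmk_full false hv0.le (by linarith)⟩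
    · rcases le_or_gt (cylm μ (pbits h) false) 0 with hc0 | hc0
      · have hc0' : cylm μ (pbits h) false = 0 := le_antisymm hc0 (cylm_nonneg μ _ _)
        exact ⟨_, okmove_pmk_full true hv0.le (by linarith)⟩
      · have hlt : max 0 ((v:ℝ) - cylm μ (pbits h) true)
            < min ((v:ℝ)) (cylm μ (pbits h) false) := by
          apply max_lt (lt_min hvR hc0) (lt_min (by linarith) (by linarith))
        obtain ⟨q, hq1, hq2⟩ := exists_rat_btwn hlt
        exact ⟨_, okmove_pmk false q hq1 hq2⟩
  obtain ⟨p, hok⟩ := hmain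
  cases he : τ h p with
  | false => exact Or.inl ⟨_, p, hok, he, rfl⟩
  | true => exact Or.inr ⟨_, p, hok, he, rfl⟩

lemma key_dead {s : ℝ} {A : Set Cantor}
    (hτ : ∀ r : Run, ConsII τ r → IIWinsRun μ s A r) (hs : s < (v0 : ℝ))
    {h : List GRound} (hg : GoodPos μ τ v0 h) (hv0 : 0 < nsum v0 h)
    (hvc : ((nsum v0 h : ℚ) : ℝ) < (μ (cyl (pbits h))).toReal)
    (b : Bool) (hne : (Vset μ τ v0 h b).Nonempty)
    (hdead : ¬ (Vset μ τ v0 h (!b)).Nonempty) :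
    sInf (Vset μ τ v0 h b) + cylm μ (pbits h) (!b) ≤ ((nsum v0 h : ℚ) : ℝ) := by
  set v := nsum v0 h with hvdef
  have hvR : (0:ℝ) < (v:ℝ) := by exact_mod_cast hv0
  have hadd := cylm_add μ (pbits h) b
  have hvc' : (v:ℝ) < cylm μ (pbits h) b + cylm μ (pbits h) (!b) := by
    rw [hadd]; exact hvc
  have hcbv : cylm μ (pbits h) (!b) ≤ (v:ℝ) := dead_le hτ hs hg hv0 (!b) hdead
  have hkey : sInf (Vset μ τ v0 h b) ≤ (v:ℝ) - cylm μ (pbits h) (!b) := by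
    apply le_of_forall_pos_le_add
    intro ε hε
    rcases le_or_gt (cylm μ (pbits h) (!b)) 0 with hc | hc
    · have hc' : cylm μ (pbits h) (!b) = 0 := le_antisymm hc (cylm_nonneg μ _ _)
      have hok : OKmove μ v0 h (pmk b v 0) := okmove_pmk_full b hv0.le (by linarith)
      rcases eq_or_ne (τ h (pmk b v 0)) b with he | hne'
      · have hmem : ((v:ℚ) : ℝ) ∈ Vset μ τ v0 h b := ⟨pmk b v 0, hok, he, by rw [pv_pmk]⟩
        have := csInf_le (Vset_bddBelow μ τ v0 h b) hmem
        linarith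
      · exfalso
        apply hdead
        exact ⟨_, _, hok, bool_eq_not hne', rfl⟩
    · have hlt : (v:ℝ) - cylm μ (pbits h) (!b)
          < min (min ((v:ℝ)) (cylm μ (pbits h) b)) ((v:ℝ) - cylm μ (pbits h) (!b) + ε) := by
        apply lt_min (lt_min (by linarith) (by linarith)) (by linarith)
      obtain ⟨q, hq1, hq2⟩ := exists_rat_btwn hlt
      have hok : OKmove μ v0 h (pmk b q (v - q)) := by
        apply okmove_pmk b q
        · apply max_lt _ hq1
          linarith
        · exact lt_of_lt_of_le hq2 (min_le_left _ _)
      rcases eq_or_ne (τ h (pmk b q (v - q))) b with he | hne'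
      · have hmem : ((q:ℚ) : ℝ) ∈ Vset μ τ v0 h b := ⟨_, hok, he, by rw [pv_pmk]⟩
        have h5 := csInf_le (Vset_bddBelow μ τ v0 h b) hmem
        have h6 : (q:ℝ) ≤ (v:ℝ) - cylm μ (pbits h) (!b) + ε :=
          le_of_lt (lt_of_lt_of_le hq2 (min_le_right _ _))
        linarith
      · exfalso
        apply hdead
        exact ⟨_, _, hok, bool_eq_not hne', rfl⟩
  linarith

lemma key_both {h : List GRound} (hv0 : 0 < nsum v0 h)
    (hvc : ((nsum v0 h : ℚ) : ℝ) < (μ (cyl (pbits h))).toReal)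
    (hne0 : (Vset μ τ v0 h false).Nonempty) (hne1 : (Vset μ τ v0 h true).Nonempty) :
    sInf (Vset μ τ v0 h false) + sInf (Vset μ τ v0 h true) ≤ ((nsum v0 h : ℚ) : ℝ) := by
  set v := nsum v0 h with hvdef
  set c0 := cylm μ (pbits h) false with hc0def
  set c1 := cylm μ (pbits h) true with hc1def
  set i0 := sInf (Vset μ τ v0 h false) with hi0
  set i1 := sInf (Vset μ τ v0 h true) with hi1
  by_contra hgt
  push_neg at hgt
  obtain ⟨x0, hx0⟩ := hne0
  obtain ⟨x1, hx1⟩ := hne1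
  have hb0 := vset_mem_bounds (τ := τ) hx0
  have hb1 := vset_mem_bounds (τ := τ) hx1
  have hi0le : i0 ≤ min ((v:ℝ)) c0 :=
    le_trans (csInf_le (Vset_bddBelow μ τ v0 h false) hx0) (by simpa using hb0.2)
  have hi1le : i1 ≤ min ((v:ℝ)) c1 :=
    le_trans (csInf_le (Vset_bddBelow μ τ v0 h true) hx1) (by simpa using hb1.2)
  have h1 : (v:ℝ) - i1 < i0 := by linarith
  have hi1v : i1 ≤ (v:ℝ) := le_trans hi1le (min_le_left _ _)
  have hi1c : i1 ≤ c1 := le_trans hi1le (min_le_right _ _)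
  obtain ⟨q, hq1, hq2⟩ := exists_rat_btwn h1
  have hok : OKmove μ v0 h (pmk false q (v - q)) := by
    apply okmove_pmk false q
    · have : max 0 ((v:ℝ) - c1) ≤ (v:ℝ) - i1 := max_le (by linarith) (by linarith)
      simpa using lt_of_le_of_lt this hq1
    · calc (q:ℝ) < i0 := hq2
        _ ≤ _ := by simpa using hi0le
  cases he : τ h (pmk false q (v - q)) with
  | false =>
    have hmem : ((q:ℚ) : ℝ) ∈ Vset μ τ v0 h false := ⟨_, hok, he, by rw [pv_pmk]⟩
    have := csInf_le (Vset_bddBelow μ τ v0 h false) hmem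
    linarith
  | true =>
    have hmem : ((v - q : ℚ) : ℝ) ∈ Vset μ τ v0 h true := by
      refine ⟨_, hok, he, ?_⟩
      have : pv (pmk false q (v - q)) (!false) = v - q := pv_pmk_not false q (v - q)
      simp only [Bool.not_false] at this
      rw [this]
    have h7 := csInf_le (Vset_bddBelow μ τ v0 h true) hmem
    have h8 : ((v - q : ℚ) : ℝ) = (v:ℝ) - (q:ℝ) := by push_cast; ring
    rw [h8] at h7
    linarith

end NodeAnalysis
section TreeMeasure

variable (μ : Measure Cantor) [IsProbabilityMeasure μ] (τ : StratII) (v0 κ0 : ℚ)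
  (hκ : 0 < κ0)

/-- invariant carried by the constructed data at each live node. -/
def InvD (t : List Bool) (d : ℚ × List GRound) : Prop :=
  GoodPos μ τ v0 d.2 ∧ pbits d.2 = t ∧ nsum v0 d.2 = d.1 ∧ 0 < d.1 ∧
    ((d.1 : ℝ) < (μ (cyl t)).toReal)

lemma inv_D {s : ℝ} {A : Set Cantor}
    (hτ : ∀ r : Run, ConsII τ r → IIWinsRun μ s A r) (hs : s < (v0 : ℝ))
    (hs0 : 0 ≤ s) (hv1 : (v0 : ℝ) < 1) :
    ∀ t d, Dfun μ τ v0 κ0 hκ t = some d → InvD μ τ v0 t d := by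
  intro t
  induction t using List.reverseRecOn with
  | nil =>
    intro d hd
    rw [Dfun_nil] at hd
    obtain rfl : (v0, ([] : List GRound)) = d := Option.some.inj hd
    refine ⟨GoodPos.nil, rfl, rfl, ?_, ?_⟩
    · exact_mod_cast lt_of_le_of_lt hs0 hs
    · rw [cyl_nil]
      simp only [measure_univ, ENNReal.toReal_one]
      exact hv1
  | append_singleton t b ih =>
    intro d hd
    rw [Dfun_snoc] at hd
    cases e : Dfun μ τ v0 κ0 hκ t with
    | none => rw [e] at hd; simp at hd
    | some d0 =>
      rw [e] at hd
      simp only [Option.bind_some] at hd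
      obtain ⟨hgp, hpb, hns, hpos, hlt⟩ := ih d0 e
      obtain ⟨p, hok, htp, hdd, -⟩ := stepD_some μ τ v0 κ0 hκ hd
      subst hdd
      have hgp' : GoodPos μ τ v0 (d0.2 ++ [(p, b)]) := by
        rw [← htp]; exact hgp.snoc hok
      have hnz : pv p b ≠ 0 := by
        have := no_zero_pick μ τ v0 hτ hs hgp hok
        rwa [htp] at this
      have hge := (hok.1 b).1
      have hble := (hok.1 b).2.1
      have hbstrict := (hok.1 b).2.2
      have hpv0 : 0 < pv p b := lt_of_le_of_ne hge (Ne.symm hnz)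
      refine ⟨hgp', ?_, ?_, hpv0, ?_⟩
      · rw [pbits_concat, hpb]
      · rw [nsum_concat]
      · have hc : (0:ℝ) < (μ (cyl (pbits d0.2 ++ [b]))).toReal :=
          lt_of_lt_of_le (by exact_mod_cast hpv0) hble
        have := hbstrict hc
        rwa [hpb] at this

/-- the union of the cylinders on live nodes `n` levels below `t`. -/
def Sn (n : ℕ) (t : List Bool) : Set Cantor :=
  ⋃ (w : List Bool) (_ : w.length = n ∧ (Dfun μ τ v0 κ0 hκ (t ++ w)).isSome), cyl (t ++ w)

lemma mem_Sn {n : ℕ} {t : List Bool} {x : Cantor} :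
    x ∈ Sn μ τ v0 κ0 hκ n t ↔
      ∃ w : List Bool, (w.length = n ∧ (Dfun μ τ v0 κ0 hκ (t ++ w)).isSome) ∧
        x ∈ cyl (t ++ w) := by
  simp [Sn]

lemma measurableSet_Sn (n : ℕ) (t : List Bool) :
    MeasurableSet (Sn μ τ v0 κ0 hκ n t) :=
  MeasurableSet.iUnion fun w => MeasurableSet.iUnion fun _ => measurableSet_cyl _

lemma Sn_subset_cyl (n : ℕ) (t : List Bool) : Sn μ τ v0 κ0 hκ n t ⊆ cyl t := by
  intro x hx
  obtain ⟨w, -, hw⟩ := (mem_Sn μ τ v0 κ0 hκ).1 hx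
  exact cyl_anti ⟨w, rfl⟩ hw

lemma Sn_zero_live {t : List Bool} (h : (Dfun μ τ v0 κ0 hκ t).isSome) :
    Sn μ τ v0 κ0 hκ 0 t = cyl t := by
  ext x
  rw [mem_Sn]
  constructor
  · rintro ⟨w, ⟨hw, -⟩, hx⟩
    rw [List.length_eq_zero_iff] at hw
    subst hw
    rwa [List.append_nil] at hx
  · intro hx
    exact ⟨[], ⟨rfl, by rwa [List.append_nil]⟩, by rwa [List.append_nil]⟩

lemma Sn_dead {n : ℕ} {t : List Bool} (h : ¬ (Dfun μ τ v0 κ0 hκ t).isSome) :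
    Sn μ τ v0 κ0 hκ n t = ∅ := by
  ext x
  rw [mem_Sn]
  simp only [Set.mem_empty_iff_false, iff_false]
  rintro ⟨w, ⟨-, hsome⟩, -⟩
  exact h (Dfun_some_of_append μ τ v0 κ0 hκ hsome)

lemma Sn_succ (n : ℕ) (t : List Bool) :
    Sn μ τ v0 κ0 hκ (n + 1) t
      = Sn μ τ v0 κ0 hκ n (t ++ [false]) ∪ Sn μ τ v0 κ0 hκ n (t ++ [true]) := by
  ext x
  rw [Set.mem_union, mem_Sn, mem_Sn, mem_Sn]
  constructor
  · rintro ⟨w, ⟨hlen, hsome⟩, hx⟩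
    cases w with
    | nil => simp at hlen
    | cons b w' =>
      have he : t ++ b :: w' = (t ++ [b]) ++ w' := by simp
      rw [he] at hsome hx
      have hlen' : w'.length = n := by simpa using hlen
      cases b
      · exact Or.inl ⟨w', ⟨hlen', hsome⟩, hx⟩
      · exact Or.inr ⟨w', ⟨hlen', hsome⟩, hx⟩
  · rintro (⟨w, ⟨hlen, hsome⟩, hx⟩ | ⟨w, ⟨hlen, hsome⟩, hx⟩)
    · refine ⟨false :: w, ⟨by simp [hlen], ?_⟩, ?_⟩ <;>
        · rw [show t ++ false :: w = (t ++ [false]) ++ w by simp]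
          assumption
    · refine ⟨true :: w, ⟨by simp [hlen], ?_⟩, ?_⟩ <;>
        · rw [show t ++ true :: w = (t ++ [true]) ++ w by simp]
          assumption

lemma Sn_succ_subset (n : ℕ) (t : List Bool) :
    Sn μ τ v0 κ0 hκ (n + 1) t ⊆ Sn μ τ v0 κ0 hκ n t := by
  intro x hx
  obtain ⟨w, ⟨hlen, hsome⟩, hx⟩ := (mem_Sn μ τ v0 κ0 hκ).1 hx
  rw [mem_Sn]
  refine ⟨w.take n, ⟨by simp [hlen], ?_⟩, ?_⟩
  · apply Dfun_some_of_append μ τ v0 κ0 hκ (u := w.drop n)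
    rwa [List.append_assoc, List.take_append_drop]
  · apply cyl_anti _ hx
    exact ⟨w.drop n, by rw [List.append_assoc, List.take_append_drop]⟩

lemma measure_Sn {s : ℝ} {A : Set Cantor}
    (hτ : ∀ r : Run, ConsII τ r → IIWinsRun μ s A r) (hs : s < (v0 : ℝ))
    (hs0 : 0 ≤ s) (hv1 : (v0 : ℝ) < 1) :
    ∀ (n : ℕ) (t : List Bool) (d : ℚ × List GRound), Dfun μ τ v0 κ0 hκ t = some d →
      (μ (cyl t)).toReal - (d.1 : ℝ) - 4 * (κ0 : ℝ) / 4 ^ t.length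
        ≤ (μ (Sn μ τ v0 κ0 hκ n t)).toReal := by
  classical
  have hκR : (0:ℝ) < (κ0 : ℝ) := by exact_mod_cast hκ
  intro n
  induction n with
  | zero =>
    intro t d hd
    obtain ⟨-, -, -, hpos, -⟩ := inv_D μ τ v0 κ0 hκ hτ hs hs0 hv1 t d hd
    rw [Sn_zero_live μ τ v0 κ0 hκ (by rw [hd]; rfl)]
    have h1 : (0:ℝ) < (d.1 : ℝ) := by exact_mod_cast hpos
    have h2 : (0:ℝ) < 4 * (κ0 : ℝ) / 4 ^ t.length := by positivity
    linarith
  | succ n ih =>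
    intro t d hd
    obtain ⟨hgp, hpb, hns, hpos, hlt⟩ := inv_D μ τ v0 κ0 hκ hτ hs hs0 hv1 t d hd
    have hlen : d.2.length = t.length := by
      rw [← pbits_length d.2, hpb]
    -- the per-child bound
    have hchild : ∀ b : Bool,
        (μ (cyl (t ++ [b]))).toReal
            - (if (Vset μ τ v0 d.2 b).Nonempty then sInf (Vset μ τ v0 d.2 b)
               else (μ (cyl (t ++ [b]))).toReal)
            - (κ0 : ℝ) / 4 ^ t.length - 4 * (κ0 : ℝ) / 4 ^ (t.length + 1)
          ≤ (μ (Sn μ τ v0 κ0 hκ n (t ++ [b]))).toReal := by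
      intro b
      by_cases hb : (Vset μ τ v0 d.2 b).Nonempty
      · rw [if_pos hb]
        have hsome : (stepD μ τ v0 κ0 hκ d.2 b).isSome := by
          rw [stepD]
          rw [dif_pos hb]
          rfl
        obtain ⟨db, he⟩ := Option.isSome_iff_exists.1 hsome
        have hD : Dfun μ τ v0 κ0 hκ (t ++ [b]) = some db := by
          rw [Dfun_snoc, hd, Option.bind_some, he]
        obtain ⟨p, hok, htp, hdd, hnear⟩ := stepD_some μ τ v0 κ0 hκ he
        have hdb1 : (db.1 : ℝ) < sInf (Vset μ τ v0 d.2 b) + (κ0 : ℝ) / 4 ^ t.length := by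
          rw [hdd]
          have : ((κ0 / 4 ^ d.2.length : ℚ) : ℝ) = (κ0 : ℝ) / 4 ^ t.length := by
            rw [hlen]; push_cast; ring
          rw [← this]
          exact hnear
        have hih := ih (t ++ [b]) db hD
        rw [List.length_append, List.length_cons, List.length_nil] at hih
        linarith
      · rw [if_neg hb]
        have hD : Dfun μ τ v0 κ0 hκ (t ++ [b]) = none := by
          rw [Dfun_snoc, hd, Option.bind_some]
          rw [stepD]
          exact dif_neg hb
        have hSe : Sn μ τ v0 κ0 hκ n (t ++ [b]) = ∅ :=
          Sn_dead μ τ v0 κ0 hκ (by rw [hD]; simp)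
        rw [hSe]
        simp only [measure_empty, ENNReal.toReal_zero]
        have h2 : (0:ℝ) < (κ0 : ℝ) / 4 ^ t.length := by positivity
        have h3 : (0:ℝ) < 4 * (κ0 : ℝ) / 4 ^ (t.length + 1) := by positivity
        linarith
    -- the key inequality
    have hkey :
        (if (Vset μ τ v0 d.2 false).Nonempty then sInf (Vset μ τ v0 d.2 false)
          else (μ (cyl (t ++ [false]))).toReal)
        + (if (Vset μ τ v0 d.2 true).Nonempty then sInf (Vset μ τ v0 d.2 true)
          else (μ (cyl (t ++ [true]))).toReal) ≤ (d.1 : ℝ) := by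
      have hv0' : 0 < nsum v0 d.2 := by rw [hns]; exact hpos
      have hvc' : ((nsum v0 d.2 : ℚ) : ℝ) < (μ (cyl (pbits d.2))).toReal := by
        rw [hns, hpb]; exact hlt
      by_cases h0 : (Vset μ τ v0 d.2 false).Nonempty <;>
        by_cases h1 : (Vset μ τ v0 d.2 true).Nonempty
      · rw [if_pos h0, if_pos h1]
        have := key_both hv0' hvc' h0 h1
        rwa [hns] at this
      · rw [if_pos h0, if_neg h1]
        have := key_dead hτ hs hgp hv0' hvc' false h0 (by simpa using h1)
        rw [hns, hpb] at this
        simpa using this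
      · rw [if_neg h0, if_pos h1]
        have := key_dead hτ hs hgp hv0' hvc' true h1 (by simpa using h0)
        rw [hns, hpb] at this
        have h2 : cylm μ t (!true) = (μ (cyl (t ++ [false]))).toReal := by simp [cylm]
        rw [h2] at this
        linarith
      · exfalso
        rcases exists_live hτ hs hgp hv0' hvc' with h | h
        · exact h0 h
        · exact h1 h
    -- additivity
    have hadd : (μ (Sn μ τ v0 κ0 hκ (n + 1) t)).toReal
        = (μ (Sn μ τ v0 κ0 hκ n (t ++ [false]))).toReal
          + (μ (Sn μ τ v0 κ0 hκ n (t ++ [true]))).toReal := by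
      rw [Sn_succ]
      rw [measure_union ?hdisj (measurableSet_Sn μ τ v0 κ0 hκ n (t ++ [true]))]
      · exact ENNReal.toReal_add (measure_ne_top μ _) (measure_ne_top μ _)
      case hdisj =>
        exact Set.disjoint_of_subset (Sn_subset_cyl μ τ v0 κ0 hκ n (t ++ [false]))
          (Sn_subset_cyl μ τ v0 κ0 hκ n (t ++ [true])) (disjoint_cyl t)
    have hsplit := measure_cyl_split μ t
    have harith : (κ0 : ℝ) / 4 ^ t.length + (κ0 : ℝ) / 4 ^ t.length
        + (4 * (κ0 : ℝ) / 4 ^ (t.length + 1) + 4 * (κ0 : ℝ) / 4 ^ (t.length + 1))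
        = 4 * (κ0 : ℝ) / 4 ^ t.length := by
      rw [pow_succ]
      field_simp
      ring
    have hc0 := hchild false
    have hc1 := hchild true
    linarith [hc0, hc1, hkey, hadd, hsplit, harith]

end TreeMeasure
section Assembly

variable (μ : Measure Cantor) [IsProbabilityMeasure μ] (τ : StratII) (v0 κ0 : ℚ)
  (hκ : 0 < κ0)

lemma isClosed_branches (T : Set (List Bool)) : IsClosed (branches T) := by
  have he : branches T = ⋂ n : ℕ, ⋃ w ∈ {w : List Bool | w.length = n ∧ w ∈ T}, cyl w := by
    ext x
    simp only [branches, Set.mem_setOf_eq, Set.mem_iInter, Set.mem_iUnion]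
    constructor
    · intro h n
      refine ⟨(List.range n).map x, ⟨⟨by simp, h n⟩, ?_⟩⟩
      rw [mem_cyl]
      congr 1
      simp
    · intro h n
      obtain ⟨w, ⟨hlen, hw⟩, hx⟩ := h n
      rw [mem_cyl] at hx
      rw [hlen] at hx
      rwa [hx]
  rw [he]
  refine isClosed_iInter fun n => ?_
  refine Set.Finite.isClosed_biUnion ?_ fun w _ => isClosed_cyl w
  exact (List.finite_length_eq Bool n).subset fun w hw => hw.1

lemma branches_eq_iInter :
    branches {t | (Dfun μ τ v0 κ0 hκ t).isSome} = ⋂ n, Sn μ τ v0 κ0 hκ n [] := by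
  ext x
  simp only [branches, Set.mem_setOf_eq, Set.mem_iInter]
  constructor
  · intro h n
    rw [mem_Sn]
    refine ⟨(List.range n).map x, ⟨by simp, by simpa using h n⟩, ?_⟩
    rw [List.nil_append, mem_cyl]
    congr 1
    simp
  · intro h n
    obtain ⟨w, ⟨hlen, hsome⟩, hx⟩ := (mem_Sn μ τ v0 κ0 hκ).1 (h n)
    rw [List.nil_append] at hsome hx
    rw [mem_cyl] at hx
    rw [hlen] at hx
    rwa [hx]

lemma measure_branches {s : ℝ} {A : Set Cantor}
    (hτ : ∀ r : Run, ConsII τ r → IIWinsRun μ s A r) (hs : s < (v0 : ℝ))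
    (hs0 : 0 ≤ s) (hv1 : (v0 : ℝ) < 1) :
    (1 : ℝ) - (v0 : ℝ) - 4 * (κ0 : ℝ)
      ≤ (μ (branches {t | (Dfun μ τ v0 κ0 hκ t).isSome})).toReal := by
  have hbound : ∀ n, (1 : ℝ) - (v0 : ℝ) - 4 * (κ0 : ℝ)
      ≤ (μ (Sn μ τ v0 κ0 hκ n [])).toReal := by
    intro n
    have := measure_Sn μ τ v0 κ0 hκ hτ hs hs0 hv1 n [] (v0, []) (Dfun_nil μ τ v0 κ0 hκ)
    simpa [cyl_nil] using this
  have hμeq : μ (branches {t | (Dfun μ τ v0 κ0 hκ t).isSome})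
      = ⨅ n, μ (Sn μ τ v0 κ0 hκ n []) := by
    rw [branches_eq_iInter]
    apply Directed.measure_iInter
    · exact fun n => (measurableSet_Sn μ τ v0 κ0 hκ n []).nullMeasurableSet
    · exact Antitone.directed_ge
        (antitone_nat_of_succ_le fun n => Sn_succ_subset μ τ v0 κ0 hκ n [])
    · exact ⟨0, measure_ne_top μ _⟩
  rw [hμeq, ENNReal.toReal_iInf fun n => measure_ne_top μ _]
  exact le_ciInf hbound

lemma branch_run {s : ℝ} {A : Set Cantor}
    (hτ : ∀ r : Run, ConsII τ r → IIWinsRun μ s A r) (hs : s < (v0 : ℝ))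
    (hs0 : 0 ≤ s) (hv1 : (v0 : ℝ) < 1) {x : Cantor}
    (hx : ∀ n, (Dfun μ τ v0 κ0 hκ ((List.range n).map x)).isSome) :
    ∃ r : Run, ConsII τ r ∧ bits r = x ∧ (∀ n, IOK μ s r n ∧ IIOK r n) := by
  set dd : ℕ → ℚ × List GRound :=
    fun n => (Dfun μ τ v0 κ0 hκ ((List.range n).map x)).get (hx n) with hdd
  have hDn : ∀ n, Dfun μ τ v0 κ0 hκ ((List.range n).map x) = some (dd n) :=
    fun n => (Option.some_get (hx n)).symm
  have hcoh : ∀ n, ∃ p : ℚ × ℚ, OKmove μ v0 (dd n).2 p ∧ τ (dd n).2 p = x n ∧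
      dd (n + 1) = (pv p (x n), (dd n).2 ++ [(p, x n)]) := by
    intro n
    have hmap : (List.range (n + 1)).map x = (List.range n).map x ++ [x n] := by
      rw [List.range_succ, List.map_append]
      rfl
    have h1 : Dfun μ τ v0 κ0 hκ ((List.range n).map x ++ [x n]) = some (dd (n + 1)) := by
      rw [← hmap]; exact hDn (n + 1)
    rw [Dfun_snoc, hDn n, Option.bind_some] at h1
    obtain ⟨p, hok, htp, hdd1, -⟩ := stepD_some μ τ v0 κ0 hκ h1
    exact ⟨p, hok, htp, hdd1⟩
  set pf : ℕ → ℚ × ℚ := fun n => Classical.choose (hcoh n) with hpf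
  have hspec := fun n => Classical.choose_spec (hcoh n)
  set r : Run := fun n => (pf n, x n) with hr
  have hd0 : (dd 0).2 = [] := by
    have := hDn 0
    rw [show ((List.range 0).map x) = ([] : List Bool) from rfl, Dfun_nil] at this
    exact (congrArg Prod.snd (Option.some.inj this)).symm
  have hhist : ∀ n, hist r n = (dd n).2 := by
    intro n
    induction n with
    | zero => rw [hist_zero, hd0]
    | succ m ih =>
      rw [hist_succ, ih, (hspec m).2.2]
  have hcons : ConsII τ r := by
    intro n
    show x n = τ (hist r n) (pf n)
    rw [hhist n, (hspec n).2.1]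
  refine ⟨r, hcons, funext fun n => rfl, fun n => ⟨?_, ?_⟩⟩
  · apply IOK_of_OKmove μ v0 hs
    rw [hhist n]
    exact (hspec n).1
  · show sel r n ≠ 0
    rw [sel_eq_pv]
    have h1 : pv (pf n) (x n) = (dd (n + 1)).1 := by
      rw [(hspec n).2.2]
    show pv (pf n) (x n) ≠ 0
    rw [h1]
    have hinv := inv_D μ τ v0 κ0 hκ hτ hs hs0 hv1 _ _ (hDn (n + 1))
    exact ne_of_gt hinv.2.2.2.1

end Assembly
/-- If `τ` is a winning strategy for player II in `G(s, A)`, then for every `ε > 0` there is a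
tree `T_ε` with `μ([T_ε]) > 1 - s - ε`, every branch of which is the sequence of II's moves in
some run consistent with `τ`; in particular `[T_ε] ⊆ A`, and consequently `μ_*(A) ≥ 1 - s`. -/
theorem tree_of_winning_II (μ : Measure Cantor) [IsProbabilityMeasure μ]
    (A : Set Cantor) (s : ℝ) (hs0 : 0 ≤ s) (hs1 : s < 1) (τ : StratII)
    (hτ : ∀ r : Run, ConsII τ r → IIWinsRun μ s A r) :
    (∀ ε : ℝ, 0 < ε → ∃ T : Set (List Bool), IsTree T ∧
      1 - s - ε < (μ (branches T)).toReal ∧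
      (∀ x ∈ branches T, ∃ r : Run, ConsII τ r ∧ bits r = x) ∧
      branches T ⊆ A) ∧
    1 - s ≤ innerM μ A := by
  have main : ∀ ε : ℝ, 0 < ε → ∃ T : Set (List Bool), IsTree T ∧
      1 - s - ε < (μ (branches T)).toReal ∧
      (∀ x ∈ branches T, ∃ r : Run, ConsII τ r ∧ bits r = x) ∧
      branches T ⊆ A ∧ IsClosed (branches T) := by
    intro ε hε
    obtain ⟨v0, hv0a, hv0b⟩ :=
      exists_rat_btwn (show s < min 1 (s + ε / 2) from lt_min hs1 (by linarith))
    have hv1 : (v0 : ℝ) < 1 := lt_of_lt_of_le hv0b (min_le_left _ _)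
    have hv2 : (v0 : ℝ) < s + ε / 2 := lt_of_lt_of_le hv0b (min_le_right _ _)
    obtain ⟨κ0, hκa, hκb⟩ := exists_rat_btwn (show (0:ℝ) < ε / 8 by linarith)
    have hκ : 0 < κ0 := by exact_mod_cast hκa
    refine ⟨{t | (Dfun μ τ v0 κ0 hκ t).isSome}, ?_, ?_, ?_, ?_, isClosed_branches _⟩
    · intro t ht u hu
      obtain ⟨w, rfl⟩ := hu
      exact Dfun_some_of_append μ τ v0 κ0 hκ ht
    · have hmb := measure_branches μ τ v0 κ0 hκ hτ hv0a hs0 hv1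
      have h8 : (κ0 : ℝ) < ε / 8 := hκb
      linarith
    · intro x hxm
      obtain ⟨r, hc, hb, -⟩ := branch_run μ τ v0 κ0 hκ hτ hv0a hs0 hv1 hxm
      exact ⟨r, hc, hb⟩
    · intro x hxm
      obtain ⟨r, hc, hb, hOK⟩ := branch_run μ τ v0 κ0 hκ hτ hv0a hs0 hv1 hxm
      rcases hτ r hc with ⟨n, -, hnot⟩ | ⟨-, hmem⟩
      · exact absurd (hOK n).1 hnot
      · rwa [hb] at hmem
  constructor
  · intro ε hε
    obtain ⟨T, h1, h2, h3, h4, -⟩ := main ε hε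
    exact ⟨T, h1, h2, h3, h4⟩
  · apply le_of_forall_pos_le_add
    intro ε hε
    obtain ⟨T, -, h2, -, h4, h5⟩ := main ε hε
    have hmem : (μ (branches T)).toReal
        ∈ {v : ℝ | ∃ F : Set Cantor, IsClosed F ∧ F ⊆ A ∧ v = (μ F).toReal} :=
      ⟨branches T, h5, h4, rfl⟩
    have hbdd : BddAbove {v : ℝ | ∃ F : Set Cantor, IsClosed F ∧ F ⊆ A ∧ v = (μ F).toReal} := by
      refine ⟨1, ?_⟩
      rintro v ⟨F, -, -, rfl⟩
      calc (μ F).toReal ≤ (μ Set.univ).toReal :=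
            ENNReal.toReal_mono (measure_ne_top μ _) (measure_mono (Set.subset_univ F))
        _ = 1 := by simp
    have hle := le_csSup hbdd hmem
    rw [innerM]
    linarith

end MeasureGame
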